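/- Let E(j₁,j₂) = K₁(j₁)+K₂(j₂)+γ(j₁−j₁⁻)(j₂−j₂⁻)+γ(j₁−j₁⁺)(j₂−j₂⁺) where K_k(j)=½(j−j_k⁻)²+½(j−j_k⁺)²+εj. Suppose j_k⁺ ≤ j_k⁻ for k=1,2, with ℓ₁:=j₁⁻−j₁⁺ < ℓ₂:=j₂⁻−j₂⁺, ε>0, and γ∈[0,1)∪(1,∞). Then E has a unique minimizer over the rectangle [j₁⁺,j₁⁻]×[j₂⁺,j₂⁻]. -/
import Mathlib


namespace Congestion

/-- The quadratic energy `E(j₁,j₂) = K₁(j₁) + K₂(j₂) + γ(j₁−j₁⁻)(j₂−j₂⁻) + γ(j₁−j₁⁺)(j₂−j₂⁺)`,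
where `K_k(j) = ½(j−j_k⁻)² + ½(j−j_k⁺)² + εj`. -/
noncomputable def Efun (j1p j1m j2p j2m ε γ : ℝ) (p : ℝ × ℝ) : ℝ :=
  ((1 / 2) * (p.1 - j1m) ^ 2 + (1 / 2) * (p.1 - j1p) ^ 2 + ε * p.1) +
    ((1 / 2) * (p.2 - j2m) ^ 2 + (1 / 2) * (p.2 - j2p) ^ 2 + ε * p.2) +
    γ * (p.1 - j1m) * (p.2 - j2m) + γ * (p.1 - j1p) * (p.2 - j2p)

/-- Centered energy. -/
noncomputable def gfun (ε γ X Y : ℝ) : ℝ := X^2 + Y^2 + 2*γ*X*Y + ε*X + ε*Y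

/-- Variational inequality: if `x` minimizes the slice and `x < hi`, the derivative is ≥ 0. -/
lemma vi_right (lo hi x c : ℝ) (hlo : lo ≤ x) (hx : x < hi)
    (h : ∀ z, lo ≤ z → z ≤ hi → 0 ≤ (z - x) * (z + x + c)) : 0 ≤ 2*x + c := by
  by_contra hc
  push_neg at hc
  rcases le_or_gt (-(c/2)) hi with h1 | h1
  · have h2 : (-(c/2) - x) * (-(c/2) + x + c) < 0 :=
      mul_neg_of_pos_of_neg (by linarith) (by linarith)
    linarith [h (-(c/2)) (by linarith) h1]
  · have h2 : (hi - x) * (hi + x + c) < 0 :=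
      mul_neg_of_pos_of_neg (by linarith) (by linarith)
    linarith [h hi (by linarith) le_rfl]

lemma vi_left (lo hi x c : ℝ) (hlo : lo < x) (hx : x ≤ hi)
    (h : ∀ z, lo ≤ z → z ≤ hi → 0 ≤ (z - x) * (z + x + c)) : 2*x + c ≤ 0 := by
  by_contra hc
  push_neg at hc
  rcases le_or_gt lo (-(c/2)) with h1 | h1
  · have h2 : (-(c/2) - x) * (-(c/2) + x + c) < 0 :=
      mul_neg_of_neg_of_pos (by linarith) (by linarith)
    linarith [h (-(c/2)) h1 (by linarith)]
  · have h2 : (lo - x) * (lo + x + c) < 0 :=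
      mul_neg_of_neg_of_pos (by linarith) (by linarith)
    linarith [h lo le_rfl (by linarith)]

/-- The delicate combo: P = (−a, γa−ε/2) on left edge, Q = (a,−b) corner, γ>1. -/
lemma hard (a ε γ t : ℝ) (ha : 0 < a) (hε : 0 < ε) (hγ : 1 < γ)
    (htle : t ≤ ε/2) (htge : -(ε/2) ≤ t)
    (hk : ε*(2*a*(γ-1)) = (t - ε/2)^2)
    (hG2raw : 0 ≤ 2*a*γ^2 - 2*a - γ*ε + ε)
    (hG1 : ε ≤ 2*a*(γ^2-1) + 2*γ*t)
    (hba : 0 < a*(γ-1) + t) : False := by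
  have hγ1 : 0 < γ - 1 := by linarith
  have htgt : -(ε/2) < t := by
    rcases htge.lt_or_eq with h | h
    · exact h
    · exfalso
      have hk' : ε*(2*a*(γ-1)) = ε*ε := by rw [← h] at hk; linarith [hk]
      have h2 : 2*a*(γ-1) = ε := mul_left_cancel₀ (ne_of_gt hε) hk'
      rw [← h] at hba; linarith
  have hG2 : ε ≤ 2*a*(γ+1) := by
    by_contra hcon
    push_neg at hcon
    nlinarith [hG2raw, mul_pos hγ1 (by linarith : 0 < ε - 2*a*(γ+1))]
  have hεG1 : 0 ≤ ε * (2*a*(γ^2-1) + 2*γ*t - ε) := mul_nonneg hε.le (by linarith)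
  have hk2 : (γ+1) * (ε*(2*a*(γ-1))) = (γ+1) * (t - ε/2)^2 := by rw [hk]
  have hprod : 0 ≤ (t + ε/2) * (2*(γ+1)*t + (γ-3)*ε) := by nlinarith [hεG1, hk2]
  have hu0 : 0 ≤ 2*(γ+1)*t + (γ-3)*ε := by
    by_contra hcon
    push_neg at hcon
    nlinarith [hprod, mul_pos (by linarith : (0:ℝ) < t + ε/2)
      (by linarith : (0:ℝ) < -(2*(γ+1)*t + (γ-3)*ε))]
  have hu2 : 2*(γ+1)*t + (γ-3)*ε ≤ 2*ε*(γ-1) := by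
    nlinarith [mul_nonneg (by linarith : (0:ℝ) ≤ γ+1) (by linarith : (0:ℝ) ≤ ε/2 - t)]
  have hm0 : 0 < ε*(γ-1) := mul_pos hε hγ1
  have hk3 : (γ+1)^2 * (ε*(2*a*(γ-1))) = (γ+1)^2 * (t - ε/2)^2 := by rw [hk]
  have hF1 : 0 ≤ (γ+1) * (ε*(γ-1)) * (2*a*(γ+1) - ε) :=
    mul_nonneg (mul_nonneg (by linarith) hm0.le) (by linarith)
  have hH1 : 0 ≤ (2*(γ+1)*t + (γ-3)*ε) * (4*ε*(γ-1) - (2*(γ+1)*t + (γ-3)*ε)) :=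
    mul_nonneg hu0 (by linarith)
  nlinarith [hk3, hF1, hH1, hm0, mul_pos hε hm0]

set_option maxHeartbeats 1600000 in
/-- Core uniqueness lemma in centered coordinates. -/
lemma centered (a b ε γ : ℝ) (hab : a < b) (hε : 0 < ε)
    (hγ : (0 ≤ γ ∧ γ < 1) ∨ 1 < γ)
    (X1 Y1 X2 Y2 : ℝ)
    (hX1l : -a ≤ X1) (hX1u : X1 ≤ a) (hY1l : -b ≤ Y1) (hY1u : Y1 ≤ b)
    (hX2l : -a ≤ X2) (hX2u : X2 ≤ a) (hY2l : -b ≤ Y2) (hY2u : Y2 ≤ b)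
    (hmin1 : ∀ X Y, -a ≤ X → X ≤ a → -b ≤ Y → Y ≤ b → gfun ε γ X1 Y1 ≤ gfun ε γ X Y)
    (hmin2 : ∀ X Y, -a ≤ X → X ≤ a → -b ≤ Y → Y ≤ b → gfun ε γ X2 Y2 ≤ gfun ε γ X Y)
    (hle : X1 ≤ X2) : X1 = X2 ∧ Y1 = Y2 := by
  have hfq : gfun ε γ X1 Y1 = gfun ε γ X2 Y2 :=
    le_antisymm (hmin1 X2 Y2 hX2l hX2u hY2l hY2u) (hmin2 X1 Y1 hX1l hX1u hY1l hY1u)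
  have hmid := hmin1 ((X1+X2)/2) ((Y1+Y2)/2) (by linarith) (by linarith) (by linarith)
    (by linarith)
  have hQv : (X2-X1)^2 + (Y2-Y1)^2 + 2*γ*(X2-X1)*(Y2-Y1) ≤ 0 := by
    have hid : gfun ε γ ((X1+X2)/2) ((Y1+Y2)/2)
        = (gfun ε γ X1 Y1 + gfun ε γ X2 Y2)/2
          - ((X2-X1)^2 + (Y2-Y1)^2 + 2*γ*(X2-X1)*(Y2-Y1))/4 := by
      simp only [gfun]; ring
    linarith [hmid]
  rcases hle.eq_or_lt with heq | hlt
  · refine ⟨heq, ?_⟩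
    rw [heq] at hQv
    have h0 : (Y2 - Y1)^2 ≤ 0 := by nlinarith [hQv]
    have h1 : Y2 - Y1 = 0 :=
      pow_eq_zero_iff (two_ne_zero) |>.mp (le_antisymm h0 (sq_nonneg _))
    linarith
  · exfalso
    rcases hγ with ⟨hγ0, hγ1⟩ | hγ1
    · nlinarith [hQv, mul_nonneg hγ0 (sq_nonneg (X2 - X1 + (Y2 - Y1))),
        mul_pos (by linarith : (0:ℝ) < 1 - γ) (mul_pos (sub_pos.2 hlt) (sub_pos.2 hlt)),
        mul_nonneg (by linarith : (0:ℝ) ≤ 1 - γ) (sq_nonneg (Y2 - Y1))]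
    · -- γ > 1
      have hv2 : Y2 < Y1 := by
        by_contra hcon
        push_neg at hcon
        nlinarith [hQv, mul_pos (sub_pos.2 hlt) (sub_pos.2 hlt),
          mul_nonneg (mul_nonneg (by linarith : (0:ℝ) ≤ γ)
            (by linarith : (0:ℝ) ≤ X2 - X1)) (by linarith : (0:ℝ) ≤ Y2 - Y1),
          sq_nonneg (Y2 - Y1)]
      have hsl1x : ∀ z, -a ≤ z → z ≤ a → 0 ≤ (z - X1) * (z + X1 + (2*γ*Y1 + ε)) := by
        intro z hz1 hz2
        have h3 := hmin1 z Y1 hz1 hz2 hY1l hY1u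
        have e : gfun ε γ z Y1 - gfun ε γ X1 Y1 = (z - X1) * (z + X1 + (2*γ*Y1 + ε)) := by
          simp only [gfun]; ring
        linarith
      have hsl1y : ∀ z, -b ≤ z → z ≤ b → 0 ≤ (z - Y1) * (z + Y1 + (2*γ*X1 + ε)) := by
        intro z hz1 hz2
        have h3 := hmin1 X1 z hX1l hX1u hz1 hz2
        have e : gfun ε γ X1 z - gfun ε γ X1 Y1 = (z - Y1) * (z + Y1 + (2*γ*X1 + ε)) := by
          simp only [gfun]; ring
        linarith
      have hsl2x : ∀ z, -a ≤ z → z ≤ a → 0 ≤ (z - X2) * (z + X2 + (2*γ*Y2 + ε)) := by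
        intro z hz1 hz2
        have h3 := hmin2 z Y2 hz1 hz2 hY2l hY2u
        have e : gfun ε γ z Y2 - gfun ε γ X2 Y2 = (z - X2) * (z + X2 + (2*γ*Y2 + ε)) := by
          simp only [gfun]; ring
        linarith
      have hsl2y : ∀ z, -b ≤ z → z ≤ b → 0 ≤ (z - Y2) * (z + Y2 + (2*γ*X2 + ε)) := by
        intro z hz1 hz2
        have h3 := hmin2 X2 z hX2l hX2u hz1 hz2
        have e : gfun ε γ X2 z - gfun ε γ X2 Y2 = (z - Y2) * (z + Y2 + (2*γ*X2 + ε)) := by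
          simp only [gfun]; ring
        linarith
      have hD1Pge : 0 ≤ 2*X1 + (2*γ*Y1 + ε) :=
        vi_right (-a) a X1 _ hX1l (lt_of_lt_of_le hlt hX2u) hsl1x
      have hD1Qle : 2*X2 + (2*γ*Y2 + ε) ≤ 0 :=
        vi_left (-a) a X2 _ (lt_of_le_of_lt hX1l hlt) hX2u hsl2x
      have hD2Ple : 2*Y1 + (2*γ*X1 + ε) ≤ 0 :=
        vi_left (-b) b Y1 _ (lt_of_le_of_lt hY2l hv2) hY1u hsl1y
      have hD2Qge : 0 ≤ 2*Y2 + (2*γ*X2 + ε) :=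
        vi_right (-b) b Y2 _ hY2l (lt_of_lt_of_le hv2 hY1u) hsl2y
      have hPx : X1 = -a ∨ 2*X1 + (2*γ*Y1 + ε) = 0 := by
        rcases hX1l.eq_or_lt with h | h
        · exact Or.inl h.symm
        · exact Or.inr (le_antisymm (vi_left (-a) a X1 _ h hX1u hsl1x) hD1Pge)
      have hPy : Y1 = b ∨ 2*Y1 + (2*γ*X1 + ε) = 0 := by
        rcases hY1u.lt_or_eq with h | h
        · exact Or.inr (le_antisymm hD2Ple
            (vi_right (-b) b Y1 _ (le_of_lt (lt_of_le_of_lt hY2l hv2)) h hsl1y))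
        · exact Or.inl h
      have hQx : X2 = a ∨ 2*X2 + (2*γ*Y2 + ε) = 0 := by
        rcases hX2u.lt_or_eq with h | h
        · exact Or.inr (le_antisymm hD1Qle (vi_right (-a) a X2 _ hX2l h hsl2x))
        · exact Or.inl h
      have hQy : Y2 = -b ∨ 2*Y2 + (2*γ*X2 + ε) = 0 := by
        rcases hY2l.eq_or_lt with h | h
        · exact Or.inl h.symm
        · exact Or.inr (le_antisymm (vi_left (-b) b Y2 _ h hY2u hsl2y) hD2Qge)
      have ha' : 0 < a := by linarith
      have hb' : 0 < b := by linarith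
      have hPsad : ¬ (2*X1 + (2*γ*Y1 + ε) = 0 ∧ 2*Y1 + (2*γ*X1 + ε) = 0) := by
        rintro ⟨e1, e2⟩
        have ht1 : min (a - X1) (b + Y1) ≤ a - X1 := min_le_left _ _
        have ht2 : min (a - X1) (b + Y1) ≤ b + Y1 := min_le_right _ _
        have ht : 0 < min (a - X1) (b + Y1) :=
          lt_min (by linarith [lt_of_lt_of_le hlt hX2u])
            (by linarith [lt_of_le_of_lt hY2l hv2])
        set t := min (a - X1) (b + Y1) with htdef
        have h5 := hmin1 (X1 + t) (Y1 - t) (by linarith) (by linarith) (by linarith)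
          (by linarith)
        have e3 : gfun ε γ (X1+t) (Y1-t) - gfun ε γ X1 Y1
            = 2*t^2*(1-γ) + t*(2*X1 + (2*γ*Y1 + ε)) - t*(2*Y1 + (2*γ*X1 + ε)) := by
          simp only [gfun]; ring
        rw [e1, e2] at e3
        nlinarith [h5, e3, mul_pos (mul_pos ht ht) (sub_pos.2 hγ1)]
      have hQsad : ¬ (2*X2 + (2*γ*Y2 + ε) = 0 ∧ 2*Y2 + (2*γ*X2 + ε) = 0) := by
        rintro ⟨e1, e2⟩
        have ht1 : min (X2 + a) (b - Y2) ≤ X2 + a := min_le_left _ _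
        have ht2 : min (X2 + a) (b - Y2) ≤ b - Y2 := min_le_right _ _
        have ht : 0 < min (X2 + a) (b - Y2) :=
          lt_min (by linarith [lt_of_le_of_lt hX1l hlt])
            (by linarith [lt_of_lt_of_le hv2 hY1u])
        set t := min (X2 + a) (b - Y2) with htdef
        have h5 := hmin2 (X2 - t) (Y2 + t) (by linarith) (by linarith) (by linarith)
          (by linarith)
        have e3 : gfun ε γ (X2-t) (Y2+t) - gfun ε γ X2 Y2
            = 2*t^2*(1-γ) - t*(2*X2 + (2*γ*Y2 + ε)) + t*(2*Y2 + (2*γ*X2 + ε)) := by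
          simp only [gfun]; ring
        rw [e1, e2] at e3
        nlinarith [h5, e3, mul_pos (mul_pos ht ht) (sub_pos.2 hγ1)]
      rcases hPy with hY1b | hD2P0
      · rcases hPx with hX1a | hD1P0
        · -- P = (−a, b)
          rcases hQy with hY2b | hD2Q0
          · rcases hQx with hX2a | hD1Q0
            · -- corners (−a,b) vs (a,−b)
              rw [hX1a, hY1b, hX2a, hY2b] at hfq
              simp only [gfun] at hfq
              nlinarith [hfq, mul_pos hε (sub_pos.2 hab)]
            · -- (C,D'): Y2=−b, D1Q=0
              rw [hY2b] at hD1Q0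
              rw [hX1a, hY1b] at hD2Ple
              have hX2v : X2 = γ*b - ε/2 := by linarith [hD1Q0]
              have hint : 0 < (γ+1)*(b - a) :=
                mul_pos (by linarith) (sub_pos.2 hab)
              nlinarith [hX2u, hD2Ple, hX2v, hint]
          · rcases hQx with hX2a | hD1Q0
            · -- (C,B')
              rw [hX2a] at hD2Q0
              rw [hX1a, hY1b] at hD2Ple
              have hY2v : Y2 = -(γ*a) - ε/2 := by linarith [hD2Q0]
              rw [hY2v] at hY2l
              linarith [hY2l, hD2Ple]
            · exact hQsad ⟨hD1Q0, hD2Q0⟩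
        · -- P-type D : D1P = 0, Y1 = b
          rw [hY1b] at hD1P0
          nlinarith [hD1P0, hX1l, hab, mul_pos hb' (sub_pos.2 hγ1)]
      · have hX1a : X1 = -a := by
          rcases hPx with h | hD1P0
          · exact h
          · exact absurd ⟨hD1P0, hD2P0⟩ hPsad
        rw [hX1a] at hD2P0
        have hY1v : Y1 = γ*a - ε/2 := by linarith [hD2P0]
        rcases hQy with hY2b | hD2Q0
        · rcases hQx with hX2a | hD1Q0
          · -- (B,C') : hard combo
            rw [hX1a, hY1v, hX2a, hY2b] at hfq
            rw [hX2a, hY2b] at hD2Qge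
            rw [hX1a, hY1v] at hD1Pge
            rw [hX2a, hY2b] at hD1Qle
            rw [hY1v] at hY1u
            simp only [gfun] at hfq
            exact hard a ε γ (b - γ*a) ha' hε hγ1
              (by linarith [hD2Qge]) (by linarith [hY1u])
              (by linear_combination hfq)
              (by linarith [hD1Pge]) (by linarith [hD1Qle]) (by linarith [hab])
          · -- (B,D')
            rw [hY2b] at hD1Q0
            have hX2v : X2 = γ*b - ε/2 := by linarith [hD1Q0]
            rw [hX1a, hY1v, hX2v, hY2b] at hfq
            rw [hX1a, hY1v] at hD1Pge
            simp only [gfun] at hfq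
            have key : (b - a)*(γ-1)*((a+b)*(γ+1) - ε) = 0 := by linear_combination hfq
            have h2 : 0 ≤ 2*a*(γ+1) - ε := by
              by_contra hcon
              push_neg at hcon
              nlinarith [hD1Pge, mul_pos (sub_pos.2 hγ1)
                (by linarith : (0:ℝ) < ε - 2*a*(γ+1))]
            have h3 : 0 < (a+b)*(γ+1) - ε := by
              nlinarith [h2, mul_pos (sub_pos.2 hab) (by linarith : (0:ℝ) < γ+1)]
            have h4 := mul_pos (mul_pos (sub_pos.2 hab) (sub_pos.2 hγ1)) h3
            linarith [key]
        · rcases hQx with hX2a | hD1Q0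
          · -- (B,B')
            rw [hX2a] at hD2Q0
            have hY2v : Y2 = -(γ*a) - ε/2 := by linarith [hD2Q0]
            rw [hX1a, hY1v, hX2a, hY2v] at hfq
            simp only [gfun] at hfq
            nlinarith [hfq, mul_pos (mul_pos hε ha') (sub_pos.2 hγ1)]
          · exact hQsad ⟨hD1Q0, hD2Q0⟩

/-- If `j_k⁺ ≤ j_k⁻`, `ℓ₁ < ℓ₂`, `ε > 0` and `γ ∈ [0,1) ∪ (1,∞)`, the energy `E` has a
unique minimizer on the rectangle `[j₁⁺, j₁⁻] × [j₂⁺, j₂⁻]`. -/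
theorem unique_minimizer_on_rectangle
    (j1p j1m j2p j2m ε γ : ℝ)
    (h1 : j1p ≤ j1m) (h2 : j2p ≤ j2m)
    (hlen : j1m - j1p < j2m - j2p)
    (hε : 0 < ε) (hγ : (0 ≤ γ ∧ γ < 1) ∨ 1 < γ) :
    ∃! p : ℝ × ℝ, p ∈ Set.Icc j1p j1m ×ˢ Set.Icc j2p j2m ∧
      ∀ q ∈ Set.Icc j1p j1m ×ˢ Set.Icc j2p j2m,
        Efun j1p j1m j2p j2m ε γ p ≤ Efun j1p j1m j2p j2m ε γ q := by
  have hKc : IsCompact (Set.Icc j1p j1m ×ˢ Set.Icc j2p j2m) :=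
    (isCompact_Icc.prod isCompact_Icc)
  have hKne : (Set.Icc j1p j1m ×ˢ Set.Icc j2p j2m).Nonempty :=
    ⟨(j1p, j2p), Set.mem_prod.mpr ⟨Set.mem_Icc.mpr ⟨le_rfl, h1⟩, Set.mem_Icc.mpr ⟨le_rfl, h2⟩⟩⟩
  have hcont : Continuous (Efun j1p j1m j2p j2m ε γ) := by
    unfold Efun; fun_prop
  obtain ⟨p, hpK, hpmin⟩ := hKc.exists_isMinOn hKne hcont.continuousOn
  have hpm : ∀ q ∈ Set.Icc j1p j1m ×ˢ Set.Icc j2p j2m,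
      Efun j1p j1m j2p j2m ε γ p ≤ Efun j1p j1m j2p j2m ε γ q :=
    fun q hq => isMinOn_iff.mp hpmin q hq
  refine ⟨p, ⟨hpK, hpm⟩, ?_⟩
  rintro q ⟨hqK, hqm⟩
  have trans : ∀ x y : ℝ, Efun j1p j1m j2p j2m ε γ (x, y)
      = gfun ε γ (x - (j1m + j1p)/2) (y - (j2m + j2p)/2)
        + Efun j1p j1m j2p j2m ε γ ((j1m + j1p)/2, (j2m + j2p)/2) := by
    intro x y; simp only [Efun, gfun]; ring
  simp only [Set.mem_prod, Set.mem_Icc] at hqK hpK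
  obtain ⟨⟨hq1l, hq1u⟩, hq2l, hq2u⟩ := hqK
  obtain ⟨⟨hp1l, hp1u⟩, hp2l, hp2u⟩ := hpK
  have hqmin' : ∀ X Y : ℝ, -((j1m - j1p)/2) ≤ X → X ≤ (j1m - j1p)/2 →
      -((j2m - j2p)/2) ≤ Y → Y ≤ (j2m - j2p)/2 →
      gfun ε γ (q.1 - (j1m + j1p)/2) (q.2 - (j2m + j2p)/2) ≤ gfun ε γ X Y := by
    intro X Y hXl hXu hYl hYu
    have hmem : (X + (j1m + j1p)/2, Y + (j2m + j2p)/2)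
        ∈ Set.Icc j1p j1m ×ˢ Set.Icc j2p j2m :=
      Set.mem_prod.mpr ⟨Set.mem_Icc.mpr ⟨by linarith, by linarith⟩,
        Set.mem_Icc.mpr ⟨by linarith, by linarith⟩⟩
    have hcmp := hqm _ hmem
    have e1 := trans (X + (j1m + j1p)/2) (Y + (j2m + j2p)/2)
    have e2 := trans q.1 q.2
    simp only [add_sub_cancel_right] at e1
    rw [Prod.mk.eta] at e2
    rw [e1, e2] at hcmp
    linarith
  have hpmin' : ∀ X Y : ℝ, -((j1m - j1p)/2) ≤ X → X ≤ (j1m - j1p)/2 →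
      -((j2m - j2p)/2) ≤ Y → Y ≤ (j2m - j2p)/2 →
      gfun ε γ (p.1 - (j1m + j1p)/2) (p.2 - (j2m + j2p)/2) ≤ gfun ε γ X Y := by
    intro X Y hXl hXu hYl hYu
    have hmem : (X + (j1m + j1p)/2, Y + (j2m + j2p)/2)
        ∈ Set.Icc j1p j1m ×ˢ Set.Icc j2p j2m :=
      Set.mem_prod.mpr ⟨Set.mem_Icc.mpr ⟨by linarith, by linarith⟩,
        Set.mem_Icc.mpr ⟨by linarith, by linarith⟩⟩
    have hcmp := hpm _ hmem
    have e1 := trans (X + (j1m + j1p)/2) (Y + (j2m + j2p)/2)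
    have e2 := trans p.1 p.2
    simp only [add_sub_cancel_right] at e1
    rw [Prod.mk.eta] at e2
    rw [e1, e2] at hcmp
    linarith
  rcases le_total q.1 p.1 with hle | hle
  · obtain ⟨e1, e2⟩ := centered ((j1m - j1p)/2) ((j2m - j2p)/2) ε γ (by linarith) hε hγ
      (q.1 - (j1m + j1p)/2) (q.2 - (j2m + j2p)/2)
      (p.1 - (j1m + j1p)/2) (p.2 - (j2m + j2p)/2)
      (by linarith) (by linarith) (by linarith) (by linarith)
      (by linarith) (by linarith) (by linarith) (by linarith)
      hqmin' hpmin' (by linarith)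
    exact Prod.ext_iff.mpr ⟨by linarith, by linarith⟩
  · obtain ⟨e1, e2⟩ := centered ((j1m - j1p)/2) ((j2m - j2p)/2) ε γ (by linarith) hε hγ
      (p.1 - (j1m + j1p)/2) (p.2 - (j2m + j2p)/2)
      (q.1 - (j1m + j1p)/2) (q.2 - (j2m + j2p)/2)
      (by linarith) (by linarith) (by linarith) (by linarith)
      (by linarith) (by linarith) (by linarith) (by linarith)
      hpmin' hqmin' (by linarith)
    exact Prod.ext_iff.mpr ⟨by linarith, by linarith⟩

end Congestion
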